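/- Let B be a Banach algebra and ω: B → ℂ a continuous character. If the kernel ker ω has a bounded left approximate identity {e_i} (a norm-bounded net with ‖e_i x − x‖ → 0 for every x ∈ ker ω), then B itself has a bounded left approximate identity. Similarly for right approximate identities. -/

import Mathlib

open Filter Topology

/-- If the kernel of a continuous character `ω` on a Banach algebra `B` has a
bounded left (resp. right) approximate identity, then `B` itself has a bounded left
(resp. right) approximate identity. -/
theorem stmt2 {B : Type*} [NormedRing B] [NormedAlgebra ℂ B]
    (ω : B →L[ℂ] ℂ) (hωm : ∀ a b : B, ω (a * b) = ω a * ω b) (hω0 : ω ≠ 0) :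
    (∀ (ι : Type) [Nonempty ι] [SemilatticeSup ι] (e : ι → B) (C : ℝ),
        (∀ i, ‖e i‖ ≤ C) → (∀ i, e i ∈ LinearMap.ker (ω : B →ₗ[ℂ] ℂ)) →
        (∀ x ∈ LinearMap.ker (ω : B →ₗ[ℂ] ℂ), Tendsto (fun i => ‖e i * x - x‖) atTop (nhds 0)) →
        ∃ (f : ι → B) (C' : ℝ), (∀ i, ‖f i‖ ≤ C') ∧
          ∀ x : B, Tendsto (fun i => ‖f i * x - x‖) atTop (nhds 0)) ∧
    (∀ (ι : Type) [Nonempty ι] [SemilatticeSup ι] (e : ι → B) (C : ℝ),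
        (∀ i, ‖e i‖ ≤ C) → (∀ i, e i ∈ LinearMap.ker (ω : B →ₗ[ℂ] ℂ)) →
        (∀ x ∈ LinearMap.ker (ω : B →ₗ[ℂ] ℂ), Tendsto (fun i => ‖x * e i - x‖) atTop (nhds 0)) →
        ∃ (f : ι → B) (C' : ℝ), (∀ i, ‖f i‖ ≤ C') ∧
          ∀ x : B, Tendsto (fun i => ‖x * f i - x‖) atTop (nhds 0)) := by
  obtain ⟨v, hv⟩ : ∃ v, ω v ≠ 0 := by
    by_contra h
    push_neg at h
    exact hω0 (by ext x; simpa using h x)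
  set u : B := (ω v)⁻¹ • v with hu
  have hωu : ω u = 1 := by
    simp [hu, map_smul, inv_mul_cancel₀ hv]
  constructor
  · intro ι _ _ e C hC hker hlim
    refine ⟨fun i => e i - e i * u + u, C + C * ‖u‖ + ‖u‖, fun i => ?_, fun x => ?_⟩
    · calc ‖e i - e i * u + u‖ ≤ ‖e i - e i * u‖ + ‖u‖ := norm_add_le _ _
        _ ≤ ‖e i‖ + ‖e i * u‖ + ‖u‖ := by
            gcongr; exact norm_sub_le _ _
        _ ≤ C + C * ‖u‖ + ‖u‖ := by
            gcongr
            · exact hC i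
            · exact (norm_mul_le _ _).trans (by gcongr; exact hC i)
    · have hz : x - u * x ∈ LinearMap.ker (ω : B →ₗ[ℂ] ℂ) := by
        simp [LinearMap.mem_ker, hωm, hωu]
      have := hlim _ hz
      convert this using 2 with i
      congr 1
      noncomm_ring
  · intro ι _ _ e C hC hker hlim
    refine ⟨fun i => e i - u * e i + u, C + ‖u‖ * C + ‖u‖, fun i => ?_, fun x => ?_⟩
    · calc ‖e i - u * e i + u‖ ≤ ‖e i - u * e i‖ + ‖u‖ := norm_add_le _ _
        _ ≤ ‖e i‖ + ‖u * e i‖ + ‖u‖ := by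
            gcongr; exact norm_sub_le _ _
        _ ≤ C + ‖u‖ * C + ‖u‖ := by
            gcongr
            · exact hC i
            · exact (norm_mul_le _ _).trans (by gcongr; exact hC i)
    · have hz : x - x * u ∈ LinearMap.ker (ω : B →ₗ[ℂ] ℂ) := by
        simp [LinearMap.mem_ker, hωm, hωu]
      have := hlim _ hz
      convert this using 2 with i
      congr 1
      noncomm_ring
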